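/- For a normal coarse space (X, E) and ultrafilters p, q ∈ B♯, the following are equivalent: (1) p ∼ q (p and q are identified in the Higson corona, i.e., h^β(p) = h^β(q) for every slowly oscillating function h : X → [0,1]); (2) P λ Q for each P ∈ p and Q ∈ q; (3) (p, q) lies in the closure of the parallelity relation ∥ in B♯ × B♯. -/

import Mathlib

open Set

/-- A coarse structure (ballean) on a set `X`. -/
structure CoarseStruct (X : Type*) where
  sets : Set (Set (X × X))
  diagonal_mem : Set.diagonal X ∈ sets
  diagonal_subset : ∀ E ∈ sets, Set.diagonal X ⊆ E
  comp_mem : ∀ E ∈ sets, ∀ F ∈ sets,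
    {p : X × X | ∃ z, (p.1, z) ∈ E ∧ (z, p.2) ∈ F} ∈ sets
  inv_mem : ∀ E ∈ sets, {p : X × X | (p.2, p.1) ∈ E} ∈ sets
  subset_mem : ∀ E ∈ sets, ∀ E' : Set (X × X),
    Set.diagonal X ⊆ E' → E' ⊆ E → E' ∈ sets
  cover : ∀ p : X × X, ∃ E ∈ sets, p ∈ E

namespace CoarseStruct

variable {X : Type*}

/-- The ball `E[A]` of radius `E` around `A`. -/
def ball (E : Set (X × X)) (A : Set X) : Set X := {y | ∃ a ∈ A, (a, y) ∈ E}

/-- A set is bounded if it is contained in a ball around a point. -/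
def IsBounded (C : CoarseStruct X) (B : Set X) : Prop :=
  ∃ E ∈ C.sets, ∃ x : X, B ⊆ ball E {x}

/-- Closeness: `A δ B`. -/
def Close (C : CoarseStruct X) (A B : Set X) : Prop :=
  ∃ E ∈ C.sets, A ⊆ ball E B ∧ B ⊆ ball E A

/-- Linkness: `A λ B`. -/
def Linked (C : CoarseStruct X) (A B : Set X) : Prop :=
  (C.IsBounded A ∧ C.IsBounded B) ∨
  ∃ A' B' : Set X, A' ⊆ A ∧ B' ⊆ B ∧ ¬C.IsBounded A' ∧ ¬C.IsBounded B' ∧ C.Close A' B'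

def LambdaEquiv (C C' : CoarseStruct X) : Prop :=
  ∀ A B : Set X, C.Linked A B ↔ C'.Linked A B

def DeltaEquiv (C C' : CoarseStruct X) : Prop :=
  ∀ A B : Set X, C.Close A B ↔ C'.Close A B

def Discrete (C : CoarseStruct X) : Prop :=
  ∀ E ∈ C.sets, ∃ B : Set X, C.IsBounded B ∧ ∀ x ∉ B, ball E {x} = {x}

def Large (C : CoarseStruct X) (Y : Set X) : Prop :=
  ∃ E ∈ C.sets, ball E Y = Set.univ

/-- The subballean on `Y` is discrete. -/
def DiscreteOn (C : CoarseStruct X) (Y : Set X) : Prop :=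
  ∀ E ∈ C.sets, ∃ B : Set X, C.IsBounded B ∧ ∀ y ∈ Y \ B, ball E {y} ∩ Y = {y}

def CoarselyDiscrete (C : CoarseStruct X) : Prop :=
  ∃ Y : Set X, C.Large Y ∧ C.DiscreteOn Y

def LambdaRigid (C : CoarseStruct X) : Prop :=
  ∀ C' : CoarseStruct X, LambdaEquiv C C' → C' = C

def DeltaRigid (C : CoarseStruct X) : Prop :=
  ∀ C' : CoarseStruct X, DeltaEquiv C C' → C' = C

def IsBase (C : CoarseStruct X) (B : Set (Set (X × X))) : Prop :=
  B ⊆ C.sets ∧ ∀ E ∈ C.sets, ∃ E' ∈ B, E ⊆ E'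

/-- Metrizable: the coarse structure has a countable base. -/
def Metrizable (C : CoarseStruct X) : Prop :=
  ∃ B : Set (Set (X × X)), B.Countable ∧ C.IsBase B

/-- Ordinal: the coarse structure has a base linearly ordered by inclusion. -/
def Ordinal (C : CoarseStruct X) : Prop :=
  ∃ B : Set (Set (X × X)), C.IsBase B ∧ IsChain (· ⊆ ·) B

def MacroUniform (C : CoarseStruct X) (f : X → ℝ) : Prop :=
  ∀ E ∈ C.sets, ∃ r : ℝ, 0 < r ∧
    ∀ x : X, ∀ y ∈ ball E {x}, ∀ z ∈ ball E {x}, |f y - f z| ≤ r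

def Submetrizable (C : CoarseStruct X) : Prop :=
  ¬C.IsBounded Set.univ ∧ ∃ C'' : CoarseStruct X,
    C.sets ⊆ C''.sets ∧ ¬C''.IsBounded Set.univ ∧ C''.Metrizable

def SlowlyOscillating (C : CoarseStruct X) (f : X → ℝ) : Prop :=
  ∀ E ∈ C.sets, ∀ ε : ℝ, 0 < ε → ∃ B : Set X, C.IsBounded B ∧
    ∀ x ∉ B, ∀ y ∈ ball E {x}, ∀ z ∈ ball E {x}, |f y - f z| < ε

/-- The entourage `H_{(E,Φ)}`: `H[x] = {x}` for `x ∈ Φ` and `H[x] = E[x] \ Φ` for `x ∉ Φ`. -/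
def EPhiBase (E : Set (X × X)) (Φ : Set X) : Set (X × X) :=
  {p | (p.1 ∈ Φ ∧ p.1 = p.2) ∨ (p.1 ∉ Φ ∧ p.2 ∉ Φ ∧ (p.1, p.2) ∈ E)}

/-- The family of entourages of the coarse structure `E_φ` with base `{H_{(E,Φ)}}`. -/
def EPhiSets (C : CoarseStruct X) (φ : Filter X) : Set (Set (X × X)) :=
  {E' | Set.diagonal X ⊆ E' ∧ ∃ E ∈ C.sets, ∃ Φ ∈ φ, E' ⊆ EPhiBase E Φ}

/-- The set `B♯` of ultrafilters containing the complement of every bounded set. -/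
def Bsharp (C : CoarseStruct X) : Set (Ultrafilter X) :=
  {p | ∀ B : Set X, C.IsBounded B → Bᶜ ∈ p}

/-- Parallelity of ultrafilters: `p ∥ q`. -/
def Parallel (C : CoarseStruct X) (p q : Ultrafilter X) : Prop :=
  ∃ E ∈ C.sets, ∀ P ∈ p, ball E P ∈ q

def AsympDisjoint (C : CoarseStruct X) (A B : Set X) : Prop :=
  ∀ E ∈ C.sets, C.IsBounded (ball E A ∩ ball E B)

def AsympNbhd (C : CoarseStruct X) (A U : Set X) : Prop :=
  ∀ E ∈ C.sets, C.IsBounded (ball E A \ U)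

def Normal (C : CoarseStruct X) : Prop :=
  ∀ A B : Set X, C.AsympDisjoint A B →
    ∃ U V : Set X, C.AsympNbhd A U ∧ C.AsympNbhd B V ∧ Disjoint U V

end CoarseStruct

/-- `p ∼ q`: the ultrafilters are identified in the Higson corona, i.e. every slowly
oscillating function `h : X → [0,1]` has the same limit along `p` and along `q`. -/
def HigsonEquiv {X : Type*} (C : CoarseStruct X) (p q : Ultrafilter X) : Prop :=
  ∀ h : X → ℝ, (∀ x : X, h x ∈ Set.Icc (0 : ℝ) 1) → C.SlowlyOscillating h →
    ∀ L : ℝ, Filter.Tendsto h (p : Filter X) (nhds L) ↔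
      Filter.Tendsto h (q : Filter X) (nhds L)


namespace CoarseStruct

variable {X : Type*} {C : CoarseStruct X}

/-- Composition of entourages. -/
def kcomp (E F : Set (X × X)) : Set (X × X) :=
  {p : X × X | ∃ z, (p.1, z) ∈ E ∧ (z, p.2) ∈ F}

/-- Inverse of an entourage. -/
def kinv (E : Set (X × X)) : Set (X × X) := {p : X × X | (p.2, p.1) ∈ E}

lemma kcomp_mem {E F : Set (X × X)} (hE : E ∈ C.sets) (hF : F ∈ C.sets) :
    kcomp E F ∈ C.sets := C.comp_mem E hE F hF

lemma kinv_mem {E : Set (X × X)} (hE : E ∈ C.sets) : kinv E ∈ C.sets := C.inv_mem E hE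

lemma ball_mono_set {E : Set (X × X)} {A B : Set X} (h : A ⊆ B) : ball E A ⊆ ball E B := by
  rintro y ⟨a, ha, hay⟩; exact ⟨a, h ha, hay⟩

lemma subset_ball_self {E : Set (X × X)} (hE : E ∈ C.sets) (A : Set X) : A ⊆ ball E A :=
  fun a ha => ⟨a, ha, C.diagonal_subset E hE rfl⟩

lemma ball_ball_subset {E F : Set (X × X)} (A : Set X) :
    ball F (ball E A) ⊆ ball (kcomp E F) A := by
  rintro y ⟨b, ⟨a, ha, hab⟩, hby⟩; exact ⟨a, ha, b, hab, hby⟩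

lemma union_mem {E F : Set (X × X)} (hE : E ∈ C.sets) (hF : F ∈ C.sets) :
    E ∪ F ∈ C.sets := by
  refine C.subset_mem _ (kcomp_mem hE hF) (E ∪ F)
    (fun p hp => Or.inl (C.diagonal_subset E hE hp)) ?_
  rintro ⟨a, b⟩ (h | h)
  · exact ⟨b, h, C.diagonal_subset F hF rfl⟩
  · exact ⟨a, C.diagonal_subset E hE rfl, h⟩

lemma isBounded_subset {A B : Set X} (hB : C.IsBounded B) (h : A ⊆ B) : C.IsBounded A := by
  obtain ⟨E, hE, x, hx⟩ := hB; exact ⟨E, hE, x, h.trans hx⟩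

lemma isBounded_empty [Nonempty X] : C.IsBounded (∅ : Set X) :=
  ⟨Set.diagonal X, C.diagonal_mem, Classical.arbitrary X, by simp [ball]⟩

lemma isBounded_union {A B : Set X} (hA : C.IsBounded A) (hB : C.IsBounded B) :
    C.IsBounded (A ∪ B) := by
  obtain ⟨E₁, hE₁, x₁, h₁⟩ := hA
  obtain ⟨E₂, hE₂, x₂, h₂⟩ := hB
  obtain ⟨E₃, hE₃, hx⟩ := C.cover (x₁, x₂)
  refine ⟨E₁ ∪ kcomp E₃ E₂, union_mem hE₁ (kcomp_mem hE₃ hE₂), x₁, ?_⟩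
  rintro y (hy | hy)
  · obtain ⟨a, ha, hay⟩ := h₁ hy
    rw [Set.mem_singleton_iff] at ha; subst ha
    exact ⟨a, rfl, Or.inl hay⟩
  · obtain ⟨a, ha, hay⟩ := h₂ hy
    rw [Set.mem_singleton_iff] at ha; subst ha
    exact ⟨x₁, rfl, Or.inr ⟨a, hx, hay⟩⟩

lemma isBounded_ball {A : Set X} {E : Set (X × X)} (hA : C.IsBounded A) (hE : E ∈ C.sets) :
    C.IsBounded (ball E A) := by
  obtain ⟨E₀, hE₀, x, hx⟩ := hA
  exact ⟨kcomp E₀ E, kcomp_mem hE₀ hE, x, (ball_mono_set hx).trans (ball_ball_subset _)⟩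

lemma unbounded_of_mem {p : Ultrafilter X} (hp : p ∈ C.Bsharp) {P : Set X} (hP : P ∈ p) :
    ¬C.IsBounded P := fun h => (Ultrafilter.compl_mem_iff_notMem.mp (hp P h)) hP

end CoarseStruct
namespace CoarseStruct

variable {X : Type*} {C : CoarseStruct X}

lemma asympDisjoint_mono {A B A' B' : Set X} (h : C.AsympDisjoint A B)
    (hA : A' ⊆ A) (hB : B' ⊆ B) : C.AsympDisjoint A' B' := fun E hE =>
  isBounded_subset (h E hE)
    (Set.inter_subset_inter (ball_mono_set hA) (ball_mono_set hB))

lemma asympDisjoint_union {A B B' : Set X} (h : C.AsympDisjoint A B)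
    (h' : C.AsympDisjoint A B') : C.AsympDisjoint A (B ∪ B') := by
  intro E hE
  have : ball E (B ∪ B') = ball E B ∪ ball E B' := by
    ext y; constructor
    · rintro ⟨a, (ha | ha), hay⟩
      exacts [Or.inl ⟨a, ha, hay⟩, Or.inr ⟨a, ha, hay⟩]
    · rintro (⟨a, ha, hay⟩ | ⟨a, ha, hay⟩)
      exacts [⟨a, Or.inl ha, hay⟩, ⟨a, Or.inr ha, hay⟩]
  rw [this, Set.inter_union_distrib_left]
  exact isBounded_union (h E hE) (h' E hE)

lemma inter_bounded_of_asympDisjoint {A B : Set X} (h : C.AsympDisjoint A B) :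
    C.IsBounded (A ∩ B) :=
  isBounded_subset (h _ C.diagonal_mem)
    (Set.inter_subset_inter (subset_ball_self C.diagonal_mem A)
      (subset_ball_self C.diagonal_mem B))

/-- Key claim: if `U` is an asymptotic neighbourhood of `A` and `U ∩ V = ∅`,
then `A` and `V` are asymptotically disjoint. -/
lemma asympDisjoint_of_nbhd_disjoint {A U V : Set X} (hU : C.AsympNbhd A U)
    (hUV : Disjoint U V) : C.AsympDisjoint A V := by
  intro E hE
  have hG : kcomp E (kinv E) ∈ C.sets := kcomp_mem hE (kinv_mem hE)
  have hBdd : C.IsBounded (ball (kcomp E (kinv E)) A \ U) := hU _ hG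
  refine isBounded_subset (isBounded_ball hBdd hE) ?_
  rintro x ⟨⟨a, ha, hax⟩, ⟨v, hv, hvx⟩⟩
  refine ⟨v, ⟨⟨a, ha, x, hax, hvx⟩, fun hvU => hUV.ne_of_mem hvU hv rfl⟩, hvx⟩

/-- `A ⋐ T` : `A` is "deep inside" `T`. -/
def Sep (C : CoarseStruct X) (A T : Set X) : Prop := C.AsympDisjoint A Tᶜ

lemma Sep.mono {A T A' T' : Set X} (h : C.Sep A T) (hA : A' ⊆ A) (hT : T ⊆ T') :
    C.Sep A' T' := asympDisjoint_mono h hA (Set.compl_subset_compl.mpr hT)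

lemma Sep.union {A B T : Set X} (h : C.Sep A T) (h' : C.Sep B T) : C.Sep (A ∪ B) T := by
  intro E hE
  have : ball E (A ∪ B) = ball E A ∪ ball E B := by
    ext y; constructor
    · rintro ⟨a, (ha | ha), hay⟩
      exacts [Or.inl ⟨a, ha, hay⟩, Or.inr ⟨a, ha, hay⟩]
    · rintro (⟨a, ha, hay⟩ | ⟨a, ha, hay⟩)
      exacts [⟨a, Or.inl ha, hay⟩, ⟨a, Or.inr ha, hay⟩]
  rw [this, Set.union_inter_distrib_right]
  exact isBounded_union (h E hE) (h' E hE)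

lemma Sep.inter {A T T' : Set X} (h : C.Sep A T) (h' : C.Sep A T') : C.Sep A (T ∩ T') := by
  have := asympDisjoint_union h h'
  unfold Sep
  rwa [Set.compl_inter]

lemma Sep.asympNbhd {A T : Set X} (h : C.Sep A T) : C.AsympNbhd A T := by
  intro E hE
  refine isBounded_subset (h E hE) ?_
  rintro y ⟨hy, hyT⟩
  exact ⟨hy, subset_ball_self hE _ hyT⟩

/-- Interpolation: between `A ⋐ T` one can insert an intermediate set. -/
lemma sep_interpolate (hN : C.Normal) {A T : Set X} (h : C.Sep A T) :
    ∃ W : Set X, C.Sep A W ∧ C.Sep W T := by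
  obtain ⟨U, V, hAU, hTV, hUV⟩ := hN A Tᶜ h
  have hAV : C.AsympDisjoint A V := asympDisjoint_of_nbhd_disjoint hAU hUV
  obtain ⟨U', V', hAU', hVV', hUV'⟩ := hN A V hAV
  refine ⟨V'ᶜ, by simpa [Sep] using asympDisjoint_of_nbhd_disjoint hAU' hUV', ?_⟩
  -- Sep V'ᶜ T : AsympDisjoint V'ᶜ Tᶜ
  intro F hF
  have hG : kcomp F (kinv F) ∈ C.sets := kcomp_mem hF (kinv_mem hF)
  have hB₁ : C.IsBounded (ball (kcomp F (kinv F)) Tᶜ \ V) := hTV _ hG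
  have hB₂ : C.IsBounded (V \ V') := by
    have := hVV' _ C.diagonal_mem
    refine isBounded_subset this ?_
    rintro v ⟨hv, hv'⟩
    exact ⟨subset_ball_self C.diagonal_mem _ hv, hv'⟩
  refine isBounded_subset (isBounded_ball (isBounded_union hB₁ hB₂) hF) ?_
  rintro x ⟨⟨y, hy, hyx⟩, ⟨z, hz, hzx⟩⟩
  -- y ∉ V', z ∈ Tᶜ, (y,x) ∈ F, (z,x) ∈ F
  have hyG : y ∈ ball (kcomp F (kinv F)) Tᶜ := ⟨z, hz, x, hzx, hyx⟩
  by_cases hyV : y ∈ V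
  · exact ⟨y, Or.inr ⟨hyV, hy⟩, hyx⟩
  · exact ⟨y, Or.inl ⟨hyG, hyV⟩, hyx⟩

end CoarseStruct
namespace CoarseStruct

variable {X : Type*} {C : CoarseStruct X}

open Classical

/-- A monotone interpolant between `S` and `T`. -/
noncomputable def mid (C : CoarseStruct X) (hN : C.Normal) (S T : Set X) : Set X :=
  if h : C.Sep S T then ((sep_interpolate hN h).choose ∪ S) ∩ T else S

lemma subset_mid (hN : C.Normal) {S T : Set X} (hST : S ⊆ T) : S ⊆ C.mid hN S T := by
  unfold mid
  split_ifs
  · exact Set.subset_inter (Set.subset_union_right) hST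
  · exact le_refl S

lemma mid_subset (hN : C.Normal) {S T : Set X} (hST : S ⊆ T) : C.mid hN S T ⊆ T := by
  unfold mid
  split_ifs
  · exact Set.inter_subset_right
  · exact hST

lemma sep_mid_left (hN : C.Normal) {S T : Set X} (h : C.Sep S T) :
    C.Sep S (C.mid hN S T) := by
  rw [mid, dif_pos h]
  obtain ⟨h1, h2⟩ := (sep_interpolate hN h).choose_spec
  exact Sep.inter (h1.mono (le_refl S) Set.subset_union_left) h

lemma sep_mid_right (hN : C.Normal) {S T : Set X} (h : C.Sep S T) :
    C.Sep (C.mid hN S T) T := by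
  rw [mid, dif_pos h]
  obtain ⟨h1, h2⟩ := (sep_interpolate hN h).choose_spec
  exact (Sep.union h2 h).mono Set.inter_subset_left (le_refl T)

/-- The dyadic chain: `chain n k` plays the role of `U(k/2^n)`. -/
noncomputable def chain (C : CoarseStruct X) (hN : C.Normal) (A B : Set X) : ℕ → ℕ → Set X
  | 0 => fun k => if k = 0 then A else Bᶜ
  | (n+1) => fun k =>
      if k % 2 = 0 then chain C hN A B n (k / 2)
      else C.mid hN (chain C hN A B n (k / 2)) (chain C hN A B n (k / 2 + 1))

section Chain

lemma chain_prop (hN : C.Normal) {A B : Set X} (hAB : C.Sep A Bᶜ) (hsub : A ⊆ Bᶜ) :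
    ∀ n : ℕ, (C.chain hN A B n 0 = A) ∧
      (∀ k, 2 ^ n ≤ k → C.chain hN A B n k = Bᶜ) ∧
      (∀ k, C.chain hN A B n k ⊆ C.chain hN A B n (k + 1)) ∧
      (∀ k, k < 2 ^ n → C.Sep (C.chain hN A B n k) (C.chain hN A B n (k + 1))) := by
  intro n
  induction n with
  | zero =>
    refine ⟨by simp [chain], fun k hk => by simp [chain]; omega, fun k => ?_, fun k hk => ?_⟩
    · by_cases h : k = 0 <;> simp [chain, h, hsub]
    · interval_cases k
      simpa [chain] using hAB
  | succ n ih =>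
    obtain ⟨ih0, ihtop, ihmono, ihsep⟩ := ih
    have hcons : ∀ k, C.chain hN A B n k ⊆ C.chain hN A B n (k + 1) := ihmono
    have key : ∀ k, C.chain hN A B (n + 1) k =
        if k % 2 = 0 then C.chain hN A B n (k / 2)
        else C.mid hN (C.chain hN A B n (k / 2)) (C.chain hN A B n (k / 2 + 1)) := by
      intro k; rfl
    refine ⟨?_, ?_, ?_, ?_⟩
    · rw [key]; simpa using ih0
    · intro k hk
      rw [key]
      by_cases h : k % 2 = 0
      · rw [if_pos h, ihtop (k / 2) (by omega)]
      · rw [if_neg h]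
        have h1 : 2 ^ n ≤ k / 2 := by
          have : 2 ^ (n + 1) = 2 * 2 ^ n := by ring
          omega
        rw [ihtop (k / 2) h1, ihtop (k / 2 + 1) (by omega)]
        exact Set.Subset.antisymm (mid_subset hN (le_refl _)) (subset_mid hN (le_refl _))
    · intro k
      rw [key, key]
      by_cases h : k % 2 = 0
      · have h2 : (k + 1) % 2 ≠ 0 := by omega
        rw [if_pos h, if_neg h2]
        have : (k + 1) / 2 = k / 2 := by omega
        rw [this]
        exact subset_mid hN (hcons _)
      · have h2 : (k + 1) % 2 = 0 := by omega
        rw [if_neg h, if_pos h2]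
        have : (k + 1) / 2 = k / 2 + 1 := by omega
        rw [this]
        exact mid_subset hN (hcons _)
    · intro k hk
      rw [key, key]
      have hpow : 2 ^ (n + 1) = 2 * 2 ^ n := by ring
      by_cases h : k % 2 = 0
      · have h2 : (k + 1) % 2 ≠ 0 := by omega
        rw [if_pos h, if_neg h2]
        have : (k + 1) / 2 = k / 2 := by omega
        rw [this]
        exact sep_mid_left hN (ihsep _ (by omega))
      · have h2 : (k + 1) % 2 = 0 := by omega
        rw [if_neg h, if_pos h2]
        have : (k + 1) / 2 = k / 2 + 1 := by omega
        rw [this]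
        exact sep_mid_right hN (ihsep _ (by omega))

lemma chain_mono (hN : C.Normal) {A B : Set X} (hAB : C.Sep A Bᶜ) (hsub : A ⊆ Bᶜ)
    {n : ℕ} {k j : ℕ} (h : k ≤ j) :
    C.chain hN A B n k ⊆ C.chain hN A B n j := by
  induction j with
  | zero => rw [Nat.le_zero.mp h]
  | succ j ihj =>
    rcases Nat.lt_or_ge k (j + 1) with h' | h'
    · exact (ihj (by omega)).trans ((chain_prop hN hAB hsub n).2.2.1 j)
    · rw [(by omega : k = j + 1)]

lemma chain_succ_even (hN : C.Normal) {A B : Set X} {n k : ℕ} (h : k % 2 = 0) :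
    C.chain hN A B (n + 1) k = C.chain hN A B n (k / 2) := by
  show (if k % 2 = 0 then _ else _) = _
  rw [if_pos h]

lemma chain_lift (hN : C.Normal) {A B : Set X} {n : ℕ} {k : ℕ} :
    ∀ t : ℕ, C.chain hN A B (n + t) (k * 2 ^ t) = C.chain hN A B n k := by
  intro t
  induction t with
  | zero => simp
  | succ t iht =>
    have he : k * 2 ^ (t + 1) % 2 = 0 := by
      rw [pow_succ, ← Nat.mul_assoc]; exact Nat.mul_mod_left _ 2
    have hd : k * 2 ^ (t + 1) / 2 = k * 2 ^ t := by
      rw [pow_succ, ← Nat.mul_assoc]; exact Nat.mul_div_cancel _ (by norm_num)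
    have := chain_succ_even (C := C) hN (A := A) (B := B) (n := n + t) (k := k * 2 ^ (t+1)) he
    rw [show n + (t + 1) = (n + t) + 1 from rfl, this, hd, iht]

lemma chain_le_chain (hN : C.Normal) {A B : Set X} (hAB : C.Sep A Bᶜ) (hsub : A ⊆ Bᶜ)
    {m j n k : ℕ} (h : j * 2 ^ n ≤ k * 2 ^ m) :
    C.chain hN A B m j ⊆ C.chain hN A B n k := by
  have h1 : C.chain hN A B (m + n) (j * 2 ^ n) = C.chain hN A B m j := chain_lift hN ..
  have h2 : C.chain hN A B (n + m) (k * 2 ^ m) = C.chain hN A B n k := chain_lift hN ..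
  rw [← h1, ← h2, Nat.add_comm n m]
  exact chain_mono hN hAB hsub h

end Chain

end CoarseStruct
namespace CoarseStruct

variable {X : Type*} {C : CoarseStruct X}

lemma isBounded_biUnion [Nonempty X] {s : Finset ℕ} {f : ℕ → Set X}
    (h : ∀ i ∈ s, C.IsBounded (f i)) : C.IsBounded (⋃ i ∈ s, f i) := by
  classical
  induction s using Finset.induction with
  | empty => simpa using (isBounded_empty : C.IsBounded ∅)
  | insert _ _ hni ih =>
    rw [Finset.set_biUnion_insert]
    exact isBounded_union (h _ (Finset.mem_insert_self _ _))
      (ih fun i hi => h i (Finset.mem_insert_of_mem hi))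

/-- The Urysohn-type function attached to the dyadic chain. -/
noncomputable def ury (C : CoarseStruct X) (hN : C.Normal) (A B : Set X) (x : X) : ℝ :=
  sInf (insert 1 {r : ℝ | ∃ n k : ℕ, 0 < k ∧ k < 2 ^ n ∧
    x ∈ C.chain hN A B n k ∧ r = (k : ℝ) / 2 ^ n})

section Ury

variable (hN : C.Normal) {A B : Set X}

lemma uryset_nonempty (x : X) : (insert 1 {r : ℝ | ∃ n k : ℕ, 0 < k ∧ k < 2 ^ n ∧
    x ∈ C.chain hN A B n k ∧ r = (k : ℝ) / 2 ^ n}).Nonempty :=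
  ⟨1, Set.mem_insert _ _⟩

lemma uryset_bddBelow (x : X) : BddBelow (insert 1 {r : ℝ | ∃ n k : ℕ, 0 < k ∧ k < 2 ^ n ∧
    x ∈ C.chain hN A B n k ∧ r = (k : ℝ) / 2 ^ n}) := by
  refine ⟨0, ?_⟩
  rintro r (rfl | ⟨n, k, hk0, hkn, hx, rfl⟩)
  · norm_num
  · positivity

lemma ury_nonneg (x : X) : 0 ≤ C.ury hN A B x :=
  le_csInf (uryset_nonempty hN x) (by
    rintro r (rfl | ⟨n, k, hk0, hkn, hx, rfl⟩)
    · norm_num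
    · positivity)

lemma ury_le_one (x : X) : C.ury hN A B x ≤ 1 :=
  csInf_le (uryset_bddBelow hN x) (Set.mem_insert _ _)

lemma ury_mem_Icc (x : X) : C.ury hN A B x ∈ Set.Icc (0:ℝ) 1 :=
  ⟨ury_nonneg hN x, ury_le_one hN x⟩

lemma ury_le {x : X} {n k : ℕ} (hk0 : 0 < k) (hkn : k < 2 ^ n)
    (hx : x ∈ C.chain hN A B n k) : C.ury hN A B x ≤ (k : ℝ) / 2 ^ n :=
  csInf_le (uryset_bddBelow hN x) (Set.mem_insert_of_mem _ ⟨n, k, hk0, hkn, hx, rfl⟩)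

lemma mem_chain_of_ury_lt (hAB : C.Sep A Bᶜ) (hsub : A ⊆ Bᶜ) {x : X} {n k : ℕ}
    (hkn : k ≤ 2 ^ n) (h : C.ury hN A B x < (k : ℝ) / 2 ^ n) :
    x ∈ C.chain hN A B n k := by
  obtain ⟨r, hr, hrk⟩ := exists_lt_of_csInf_lt (uryset_nonempty hN x) h
  rcases hr with rfl | ⟨m, j, hj0, hjm, hx, rfl⟩
  · exfalso
    have h1 : (k : ℝ) / 2 ^ n ≤ 1 := by
      rw [div_le_one (by positivity)]
      exact_mod_cast hkn
    linarith
  · have hcast : (j : ℝ) * 2 ^ n < (k : ℝ) * 2 ^ m := by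
      rw [div_lt_div_iff₀ (by positivity) (by positivity)] at hrk
      exact hrk
    have hnat : j * 2 ^ n ≤ k * 2 ^ m := by
      have : (j * 2 ^ n : ℝ) < (k * 2 ^ m : ℝ) := by push_cast; exact hcast
      exact_mod_cast this.le
    exact chain_le_chain hN hAB hsub hnat hx

lemma ury_eq_zero_on (hAB : C.Sep A Bᶜ) (hsub : A ⊆ Bᶜ) {x : X} (hx : x ∈ A) :
    C.ury hN A B x = 0 := by
  have key : ∀ n : ℕ, C.ury hN A B x ≤ (1 : ℝ) / 2 ^ (n + 1) := by
    intro n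
    have h1 : x ∈ C.chain hN A B (n + 1) 1 := by
      have h0 : C.chain hN A B (n + 1) 0 = A := (chain_prop hN hAB hsub (n + 1)).1
      exact (chain_prop hN hAB hsub (n + 1)).2.2.1 0 (by rw [h0]; exact hx)
    have := ury_le hN (A := A) (B := B) (n := n + 1) (k := 1) one_pos
      (by have := Nat.one_lt_two_pow_iff.mpr (Nat.succ_ne_zero n); exact this) h1
    simpa using this
  refine le_antisymm ?_ (ury_nonneg hN x)
  by_contra h
  push_neg at h
  obtain ⟨n, hn⟩ := exists_pow_lt_of_lt_one h (by norm_num : (1 : ℝ) / 2 < 1)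
  have hthis := key n
  have hpow : ((1:ℝ)/2) ^ n = 1 / 2 ^ n := by rw [div_pow, one_pow]
  have h4 : (1:ℝ)/2^(n+1) ≤ 1/2^n :=
    one_div_le_one_div_of_le (by positivity) (by gcongr <;> norm_num)
  rw [hpow] at hn
  linarith

lemma ury_ge_on (hAB : C.Sep A Bᶜ) (hsub : A ⊆ Bᶜ) {ε : ℝ} (hε : 0 < ε) :
    ∃ D : Set X, C.IsBounded D ∧ ∀ x ∈ B \ D, 1 - ε < C.ury hN A B x := by
  obtain ⟨n, hn⟩ := exists_pow_lt_of_lt_one hε (by norm_num : (1 : ℝ) / 2 < 1)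
  have hpow : ((1:ℝ)/2) ^ n = 1 / 2 ^ n := by rw [div_pow, one_pow]
  set k := 2 ^ n - 1 with hk
  have hk1 : k + 1 = 2 ^ n := by
    have := Nat.one_le_two_pow (n := n); omega
  have hsep : C.Sep (C.chain hN A B n k) (C.chain hN A B n (k + 1)) :=
    (chain_prop hN hAB hsub n).2.2.2 k (by omega)
  have htop : C.chain hN A B n (k + 1) = Bᶜ := (chain_prop hN hAB hsub n).2.1 _ (by omega)
  have hbdd : C.IsBounded (C.chain hN A B n k ∩ B) := by
    have : C.AsympDisjoint (C.chain hN A B n k) B := by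
      have := hsep
      rw [Sep, htop, compl_compl] at this
      exact this
    exact inter_bounded_of_asympDisjoint this
  refine ⟨C.chain hN A B n k ∩ B, hbdd, ?_⟩
  rintro x ⟨hxB, hxD⟩
  have hxk : x ∉ C.chain hN A B n k := fun h => hxD ⟨h, hxB⟩
  have hge : (k : ℝ) / 2 ^ n ≤ C.ury hN A B x := by
    by_contra h
    push_neg at h
    exact hxk (mem_chain_of_ury_lt hN hAB hsub (by omega) h)
  have hcast : ((k : ℕ) : ℝ) = 2 ^ n - 1 := by
    rw [hk]
    push_cast [Nat.one_le_two_pow (n := n)]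
    ring
  have h2 : (k : ℝ) / 2 ^ n = 1 - 1 / 2 ^ n := by
    rw [hcast]
    field_simp
  rw [h2] at hge
  have : (1:ℝ) / 2 ^ n < ε := by rw [← hpow]; exact hn
  linarith

end Ury

end CoarseStruct
namespace CoarseStruct

variable {X : Type*} {C : CoarseStruct X}

lemma ury_step (hN : C.Normal) {A B : Set X} (hAB : C.Sep A Bᶜ) (hsub : A ⊆ Bᶜ)
    {n : ℕ} {G : Set (X × X)} (hG : G ∈ C.sets)
    {y z : X} (hyz : (y, z) ∈ G)
    (hzD : z ∉ ⋃ k ∈ Finset.range (2 ^ n),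
      (ball G (C.chain hN A B n k) \ C.chain hN A B n (k + 1))) :
    C.ury hN A B z ≤ C.ury hN A B y + 2 / 2 ^ n := by
  set t := C.ury hN A B y with ht
  have ht0 : 0 ≤ t := ury_nonneg hN y
  have ht1 : t ≤ 1 := ury_le_one hN y
  set k := Nat.floor (t * 2 ^ n) + 1 with hk
  have hklt : t < (k : ℝ) / 2 ^ n := by
    rw [lt_div_iff₀ (by positivity)]
    rw [hk]; push_cast
    exact Nat.lt_floor_add_one _
  have hkge : ((k : ℝ) - 1) / 2 ^ n ≤ t := by
    rw [div_le_iff₀ (by positivity)]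
    have : ((k : ℝ) - 1) = (Nat.floor (t * 2 ^ n) : ℝ) := by rw [hk]; push_cast; ring
    rw [this]
    exact Nat.floor_le (by positivity)
  by_cases hcase : k < 2 ^ n
  · -- y ∈ chain n k, z ∈ chain n (k+1)
    have hy : y ∈ C.chain hN A B n k := mem_chain_of_ury_lt hN hAB hsub (by omega) hklt
    have hz : z ∈ C.chain hN A B n (k + 1) := by
      by_contra hzc
      exact hzD (Set.mem_biUnion (Finset.mem_range.mpr hcase) ⟨⟨y, hy, hyz⟩, hzc⟩)
    by_cases hc2 : k + 1 < 2 ^ n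
    · have := ury_le hN (k := k + 1) (by omega) hc2 hz
      have hcast : ((k + 1 : ℕ) : ℝ) = (k : ℝ) + 1 := by push_cast; ring
      calc C.ury hN A B z ≤ ((k + 1 : ℕ) : ℝ) / 2 ^ n := this
        _ = ((k : ℝ) - 1) / 2 ^ n + 2 / 2 ^ n := by rw [hcast]; ring
        _ ≤ t + 2 / 2 ^ n := by linarith
    · -- k + 1 = 2^n, so t ≥ 1 - 2/2^n
      have hk2 : (k : ℝ) = 2 ^ n - 1 := by
        have : k + 1 = 2 ^ n := by omega
        have := congrArg (fun m : ℕ => (m : ℝ)) this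
        push_cast at this
        have hkc : (k : ℝ) = (Nat.floor (t * 2 ^ n) : ℝ) + 1 := by rw [hk]; push_cast; ring
        linarith
      have : (1 : ℝ) - 2 / 2 ^ n ≤ t := by
        rw [hk2] at hkge
        have hpos : (0:ℝ) < 2 ^ n := by positivity
        calc (1:ℝ) - 2 / 2^n = (2^n - 1 - 1)/2^n := by field_simp; ring
          _ ≤ t := hkge
      linarith [ury_le_one hN (A := A) (B := B) (x := z)]
  · -- k ≥ 2^n : t ≥ 1 - 1/2^n, trivial
    have hk2 : (2:ℝ) ^ n ≤ (k : ℝ) := by exact_mod_cast (by omega : 2 ^ n ≤ k)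
    have : (1:ℝ) - 2 / 2 ^ n ≤ t := by
      have hpos : (0:ℝ) < 2 ^ n := by positivity
      have : ((2:ℝ)^n - 1) / 2^n ≤ ((k:ℝ) - 1) / 2^n := by gcongr
      have h2 : (1:ℝ) - 2/2^n ≤ (2^n - 1)/2^n := by
        rw [sub_div, div_self (ne_of_gt hpos)]
        have : (1:ℝ)/2^n ≤ 2/2^n := by gcongr <;> norm_num
        linarith
      linarith
    linarith [ury_le_one hN (A := A) (B := B) (x := z)]

lemma ury_slowlyOscillating [Nonempty X] (hN : C.Normal) {A B : Set X}
    (hAB : C.Sep A Bᶜ) (hsub : A ⊆ Bᶜ) : C.SlowlyOscillating (C.ury hN A B) := by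
  intro E hE ε hε
  obtain ⟨n, hn⟩ := exists_pow_lt_of_lt_one (by positivity : (0:ℝ) < ε / 4)
    (by norm_num : (1 : ℝ) / 2 < 1)
  have hpow : ((1:ℝ)/2) ^ n = 1 / 2 ^ n := by rw [div_pow, one_pow]
  set G := kcomp (kinv E) E with hGdef
  have hGmem : G ∈ C.sets := kcomp_mem (kinv_mem hE) hE
  set D : Set X := ⋃ k ∈ Finset.range (2 ^ n),
    (ball G (C.chain hN A B n k) \ C.chain hN A B n (k + 1)) with hDdef
  have hD : C.IsBounded D := by
    refine isBounded_biUnion ?_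
    intro k hk
    exact ((chain_prop hN hAB hsub n).2.2.2 k (Finset.mem_range.mp hk)).asympNbhd G hGmem
  refine ⟨ball (kinv E) D, isBounded_ball hD (kinv_mem hE), ?_⟩
  intro x hx y hy z hz
  obtain ⟨a, ha, hxy⟩ := hy
  rw [Set.mem_singleton_iff] at ha; rw [ha] at hxy
  obtain ⟨b, hb, hxz⟩ := hz
  rw [Set.mem_singleton_iff] at hb; rw [hb] at hxz
  have hyD : y ∉ D := fun h => hx ⟨y, h, hxy⟩
  have hzD : z ∉ D := fun h => hx ⟨z, h, hxz⟩
  have hyz : (y, z) ∈ G := ⟨x, hxy, hxz⟩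
  have hzy : (z, y) ∈ G := ⟨x, hxz, hxy⟩
  have h1 := ury_step hN hAB hsub hGmem hyz hzD
  have h2 := ury_step hN hAB hsub hGmem hzy hyD
  have habs : |C.ury hN A B y - C.ury hN A B z| ≤ 2 / 2 ^ n := abs_sub_le_iff.mpr ⟨by linarith, by linarith⟩
  have hlt : (2:ℝ) / 2 ^ n < ε := by
    rw [hpow] at hn
    have hpos : (0:ℝ) < 2 ^ n := by positivity
    rw [div_lt_iff₀ hpos] at hn ⊢
    nlinarith
  exact lt_of_le_of_lt habs hlt

end CoarseStruct
namespace CoarseStruct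

variable {X : Type*} {C : CoarseStruct X}

/-- The filter of complements of bounded sets. -/
def cobdd (C : CoarseStruct X) [Nonempty X] : Filter X where
  sets := {S | C.IsBounded Sᶜ}
  univ_sets := by simpa using (isBounded_empty (C := C))
  sets_of_superset := fun h hsub => isBounded_subset h (Set.compl_subset_compl.mpr hsub)
  inter_sets := fun {s t} hs ht => by
    simp only [Set.mem_setOf_eq, Set.compl_inter] at *
    exact isBounded_union hs ht

lemma mem_cobdd [Nonempty X] {S : Set X} : S ∈ C.cobdd ↔ C.IsBounded Sᶜ := Iff.rfl

/-- If `P λ Q` with `P, Q` unbounded, then they are not asymptotically disjoint,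
or rather: if not linked then asymptotically disjoint. -/
lemma asympDisjoint_of_not_linked {P Q : Set X} (h : ¬C.Linked P Q) :
    C.AsympDisjoint P Q := by
  intro E hE
  by_contra hb
  apply h
  right
  set Z := ball E P ∩ ball E Q with hZ
  have hF : kcomp E (kinv E) ∈ C.sets := kcomp_mem hE (kinv_mem hE)
  refine ⟨P ∩ ball (kinv E) Z, Q ∩ ball (kinv E) Z, Set.inter_subset_left,
    Set.inter_subset_left, ?_, ?_, kcomp E (kinv E), hF, ?_, ?_⟩
  · -- P' unbounded
    intro hPb
    apply hb
    refine isBounded_subset (isBounded_ball hPb hE) ?_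
    rintro z hz
    obtain ⟨a, ha, haz⟩ := hz.1
    exact ⟨a, ⟨ha, ⟨z, hz, haz⟩⟩, haz⟩
  · intro hQb
    apply hb
    refine isBounded_subset (isBounded_ball hQb hE) ?_
    rintro z hz
    obtain ⟨b, hb', hbz⟩ := hz.2
    exact ⟨b, ⟨hb', ⟨z, hz, hbz⟩⟩, hbz⟩
  · -- P' ⊆ ball F Q'
    rintro x ⟨hxP, z, hz, hxz⟩
    obtain ⟨b, hbQ, hbz⟩ := hz.2
    exact ⟨b, ⟨hbQ, ⟨z, hz, hbz⟩⟩, z, hbz, hxz⟩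
  · rintro x ⟨hxQ, z, hz, hxz⟩
    obtain ⟨a, haP, haz⟩ := hz.1
    exact ⟨a, ⟨haP, ⟨z, hz, haz⟩⟩, z, haz, hxz⟩

/-- From unbounded close sets, construct a parallel pair of ultrafilters in `B♯`. -/
lemma exists_parallel_pair [Nonempty X] {P' Q' : Set X} (hP : ¬C.IsBounded P')
    (hcl : C.Close P' Q') :
    ∃ r₁ r₂ : Ultrafilter X, r₁ ∈ C.Bsharp ∧ r₂ ∈ C.Bsharp ∧ C.Parallel r₁ r₂ ∧
      P' ∈ r₁ ∧ Q' ∈ r₂ := by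
  classical
  obtain ⟨F, hF, hPF, hQF⟩ := hcl
  haveI hne : (C.cobdd ⊓ Filter.principal P').NeBot := by
    rw [Filter.inf_principal_neBot_iff]
    intro U hU
    rcases Set.eq_empty_or_nonempty (U ∩ P') with he | hne
    · exfalso
      apply hP
      refine isBounded_subset (mem_cobdd.mp hU) fun x hx => ?_
      intro hxU
      exact Set.eq_empty_iff_forall_notMem.mp he x ⟨hxU, hx⟩
    · exact hne
  set r₁ := Ultrafilter.of (C.cobdd ⊓ Filter.principal P') with hr₁
  have hr₁le := Ultrafilter.of_le (C.cobdd ⊓ Filter.principal P')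
  have hP'r₁ : P' ∈ r₁ := hr₁le (Filter.mem_inf_of_right (Filter.mem_principal_self P'))
  have hr₁B : r₁ ∈ C.Bsharp := fun D hD =>
    hr₁le (Filter.mem_inf_of_left (mem_cobdd.mpr (by rwa [compl_compl])))
  -- choice function g
  have hgex : ∀ x ∈ P', ∃ a ∈ Q', (a, x) ∈ F := fun x hx => hPF hx
  set g : X → X := fun x => if h : x ∈ P' then (hgex x h).choose else x with hg
  have hgQ : ∀ x ∈ P', g x ∈ Q' := fun x hx => by
    rw [hg]; simp only [dif_pos hx]; exact (hgex x hx).choose_spec.1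
  have hgF : ∀ x ∈ P', (g x, x) ∈ F := fun x hx => by
    rw [hg]; simp only [dif_pos hx]; exact (hgex x hx).choose_spec.2
  set r₂ := Ultrafilter.map g r₁ with hr₂
  have hQ'r₂ : Q' ∈ r₂ := by
    rw [hr₂, Ultrafilter.mem_map]
    exact Filter.mem_of_superset hP'r₁ fun x hx => hgQ x hx
  have hr₂B : r₂ ∈ C.Bsharp := by
    intro D hD
    rw [hr₂, Ultrafilter.mem_map]
    have h1 : (ball F D)ᶜ ∈ r₁ := hr₁B _ (isBounded_ball hD hF)
    refine Filter.mem_of_superset (Filter.inter_mem hP'r₁ h1) ?_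
    rintro x ⟨hxP, hxB⟩ hgD
    exact hxB ⟨g x, hgD, hgF x hxP⟩
  refine ⟨r₁, r₂, hr₁B, hr₂B, ⟨kinv F, kinv_mem hF, ?_⟩, hP'r₁, hQ'r₂⟩
  intro R hR
  rw [hr₂, Ultrafilter.mem_map]
  refine Filter.mem_of_superset (Filter.inter_mem hR hP'r₁) ?_
  rintro x ⟨hxR, hxP⟩
  exact ⟨x, hxR, hgF x hxP⟩

/-- Ultrafilter limits of `[0,1]`-valued functions exist. -/
lemma exists_ultrafilter_lim {h : X → ℝ} (hb : ∀ x, h x ∈ Set.Icc (0:ℝ) 1)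
    (u : Ultrafilter X) : ∃ L : ℝ, Filter.Tendsto h (u : Filter X) (nhds L) := by
  obtain ⟨L, _, hL⟩ := (isCompact_Icc (a := (0:ℝ)) (b := 1)).ultrafilter_le_nhds
    (u.map h) (by
      rw [Filter.le_principal_iff]
      exact Ultrafilter.mem_map.mpr (Filter.univ_mem' fun x => hb x))
  exact ⟨L, hL⟩

/-- Slowly oscillating functions have the same limit along parallel ultrafilters. -/
lemma tendsto_of_parallel {h : X → ℝ} (hso : C.SlowlyOscillating h)
    {u v : Ultrafilter X} (hu : u ∈ C.Bsharp) (huv : C.Parallel u v) {L : ℝ}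
    (hL : Filter.Tendsto h (u : Filter X) (nhds L)) :
    Filter.Tendsto h (v : Filter X) (nhds L) := by
  obtain ⟨E, hE, hpar⟩ := huv
  rw [Metric.tendsto_nhds] at hL ⊢
  intro ε hε
  obtain ⟨Bd, hBd, hosc⟩ := hso E hE (ε / 2) (by linarith)
  have hP : {x | dist (h x) L < ε / 2} ∈ u := hL (ε/2) (by linarith)
  have hP' : {x | dist (h x) L < ε / 2} ∩ Bdᶜ ∈ u :=
    Filter.inter_mem hP (hu Bd hBd)
  have hball : ball E ({x | dist (h x) L < ε / 2} ∩ Bdᶜ) ∈ v := hpar _ hP'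
  refine Filter.mem_of_superset hball ?_
  rintro y ⟨x, ⟨hxL, hxB⟩, hxy⟩
  have h1 : |h y - h x| < ε / 2 := by
    have := hosc x hxB y ⟨x, rfl, hxy⟩ x ⟨x, rfl, C.diagonal_subset E hE rfl⟩
    exact this
  simp only [Set.mem_setOf_eq, Real.dist_eq] at hxL ⊢
  have : |h y - L| ≤ |h y - h x| + |h x - L| := abs_sub_le _ _ _
  linarith

end CoarseStruct

open CoarseStruct

/-- For a normal coarse space and `p, q ∈ B♯`:
`p ∼ q` ↔ (`P λ Q` for all `P ∈ p`, `Q ∈ q`) ↔ `(p,q)` lies in the closure of `∥`. -/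
theorem normal_corona_characterization {X : Type*} (C : CoarseStruct X)
    (hN : C.Normal) (p q : Ultrafilter X) (hp : p ∈ C.Bsharp) (hq : q ∈ C.Bsharp) :
    (HigsonEquiv C p q ↔ ∀ P ∈ p, ∀ Q ∈ q, C.Linked P Q) ∧
    ((∀ P ∈ p, ∀ Q ∈ q, C.Linked P Q) ↔
      (p, q) ∈ closure {r : Ultrafilter X × Ultrafilter X |
        r.1 ∈ C.Bsharp ∧ r.2 ∈ C.Bsharp ∧ C.Parallel r.1 r.2}) := by
  haveI hXne : Nonempty X := Filter.nonempty_of_neBot (p : Filter X)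
  set S := {r : Ultrafilter X × Ultrafilter X |
    r.1 ∈ C.Bsharp ∧ r.2 ∈ C.Bsharp ∧ C.Parallel r.1 r.2} with hSdef
  -- (1) HigsonEquiv → linked
  have impAB : HigsonEquiv C p q → ∀ P ∈ p, ∀ Q ∈ q, C.Linked P Q := by
    intro hH P hP Q hQ
    by_contra hnl
    have hdis : C.AsympDisjoint P Q := asympDisjoint_of_not_linked hnl
    have hPQb : C.IsBounded (P ∩ Q) := inter_bounded_of_asympDisjoint hdis
    have hP₀mem : P ∩ (P ∩ Q)ᶜ ∈ p := Filter.inter_mem hP (hp _ hPQb)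
    set P₀ := P ∩ (P ∩ Q)ᶜ with hP₀def
    have hsub : P₀ ⊆ Qᶜ := by rintro x ⟨hx1, hx2⟩ hxQ; exact hx2 ⟨hx1, hxQ⟩
    have hSep : C.Sep P₀ Qᶜ := by
      unfold CoarseStruct.Sep
      rw [compl_compl]
      exact asympDisjoint_mono hdis Set.inter_subset_left (le_refl _)
    set f := C.ury hN P₀ Q with hf
    have hIcc : ∀ x, f x ∈ Set.Icc (0:ℝ) 1 := fun x => ury_mem_Icc hN x
    have hso : C.SlowlyOscillating f := ury_slowlyOscillating hN hSep hsub
    have h0p : Filter.Tendsto f (p : Filter X) (nhds 0) := by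
      rw [Metric.tendsto_nhds]
      intro ε hε
      refine Filter.mem_of_superset hP₀mem fun x hx => ?_
      simp only [Set.mem_setOf_eq, Real.dist_eq]
      rw [show f x = 0 from ury_eq_zero_on hN hSep hsub hx]
      simpa using hε
    have h1q : Filter.Tendsto f (q : Filter X) (nhds 1) := by
      rw [Metric.tendsto_nhds]
      intro ε hε
      obtain ⟨D, hD, hDf⟩ := ury_ge_on hN hSep hsub (show (0:ℝ) < ε/2 by linarith)
      refine Filter.mem_of_superset (Filter.inter_mem hQ (hq D hD)) fun x hx => ?_
      have h1 := hDf x ⟨hx.1, hx.2⟩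
      have h2 := (hIcc x).2
      simp only [Set.mem_setOf_eq, Real.dist_eq]
      rw [abs_sub_comm, abs_of_nonneg (by linarith : (0:ℝ) ≤ 1 - f x)]
      linarith
    have h0q : Filter.Tendsto f (q : Filter X) (nhds 0) := (hH f hIcc hso 0).mp h0p
    have : (0 : ℝ) = 1 := tendsto_nhds_unique h0q h1q
    norm_num at this
  -- (2) linked → closure
  have impBC : (∀ P ∈ p, ∀ Q ∈ q, C.Linked P Q) → (p, q) ∈ closure S := by
    intro hlink
    rw [mem_closure_iff]
    intro O hO hmem
    obtain ⟨U, V, hU, hV, hpU, hqV, hUV⟩ := isOpen_prod_iff.mp hO p q hmem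
    obtain ⟨tP, htP, hptP, htPU⟩ :=
      ultrafilterBasis_is_basis.exists_subset_of_mem_open hpU hU
    obtain ⟨P, rfl⟩ := htP
    obtain ⟨tQ, htQ, hqtQ, htQV⟩ :=
      ultrafilterBasis_is_basis.exists_subset_of_mem_open hqV hV
    obtain ⟨Q, rfl⟩ := htQ
    have hPp : P ∈ p := hptP
    have hQq : Q ∈ q := hqtQ
    rcases hlink P hPp Q hQq with ⟨hbP, _⟩ | ⟨P', Q', hP's, hQ's, hP'u, _, hclose⟩
    · exact absurd hbP (unbounded_of_mem hp hPp)
    · obtain ⟨r₁, r₂, h1B, h2B, hpar, hPr₁, hQr₂⟩ := exists_parallel_pair hP'u hclose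
      refine ⟨(r₁, r₂), ?_, h1B, h2B, hpar⟩
      apply hUV
      exact Set.mk_mem_prod (htPU (Filter.mem_of_superset hPr₁ hP's : P ∈ r₁))
        (htQV (Filter.mem_of_superset hQr₂ hQ's : Q ∈ r₂))
  -- (3) closure → HigsonEquiv
  have impCA : (p, q) ∈ closure S → HigsonEquiv C p q := by
    intro hcl h hIcc hso L
    obtain ⟨Lp, hLp⟩ := exists_ultrafilter_lim hIcc p
    obtain ⟨Lq, hLq⟩ := exists_ultrafilter_lim hIcc q
    have hEq : Lp = Lq := by
      by_contra hne
      have hd : 0 < |Lp - Lq| := abs_pos.mpr (sub_ne_zero.mpr hne)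
      set ε := |Lp - Lq| / 5 with hεdef
      have hεpos : 0 < ε := by positivity
      have hPmem : {x | dist (h x) Lp < ε} ∈ p := Metric.tendsto_nhds.mp hLp ε hεpos
      have hQmem : {x | dist (h x) Lq < ε} ∈ q := Metric.tendsto_nhds.mp hLq ε hεpos
      have hOopen : IsOpen ({u : Ultrafilter X | {x | dist (h x) Lp < ε} ∈ u} ×ˢ
          {v : Ultrafilter X | {x | dist (h x) Lq < ε} ∈ v}) :=
        (ultrafilter_isOpen_basic _).prod (ultrafilter_isOpen_basic _)
      obtain ⟨⟨u, v⟩, huvO, hu, hv, hpar⟩ :=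
        mem_closure_iff.mp hcl _ hOopen (Set.mk_mem_prod hPmem hQmem)
      obtain ⟨E, hE, hparE⟩ := hpar
      obtain ⟨Bd, hBd, hosc⟩ := hso E hE ε hεpos
      have hPu : {x | dist (h x) Lp < ε} ∈ u := huvO.1
      have hQv : {x | dist (h x) Lq < ε} ∈ v := huvO.2
      have hP'u : {x | dist (h x) Lp < ε} ∩ Bdᶜ ∈ u := Filter.inter_mem hPu (hu Bd hBd)
      have hballv : ball E ({x | dist (h x) Lp < ε} ∩ Bdᶜ) ∈ v := hparE _ hP'u
      obtain ⟨y, ⟨x, ⟨hxP, hxB⟩, hxy⟩, hyQ⟩ :=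
        Ultrafilter.nonempty_of_mem (Filter.inter_mem hballv hQv)
      have h1 : |h y - h x| < ε :=
        hosc x hxB y ⟨x, rfl, hxy⟩ x ⟨x, rfl, C.diagonal_subset E hE rfl⟩
      simp only [Set.mem_setOf_eq, Real.dist_eq] at hxP hyQ
      have ht1 : |Lp - Lq| ≤ |Lp - h x| + |h x - Lq| := abs_sub_le _ _ _
      have ht2 : |h x - Lq| ≤ |h x - h y| + |h y - Lq| := abs_sub_le _ _ _
      have ha1 : |Lp - h x| = |h x - Lp| := abs_sub_comm _ _
      have ha2 : |h x - h y| = |h y - h x| := abs_sub_comm _ _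
      rw [hεdef] at hxP hyQ h1
      linarith
    constructor
    · intro hTp
      have : L = Lp := tendsto_nhds_unique hTp hLp
      rw [this, hEq]
      exact hLq
    · intro hTq
      have : L = Lq := tendsto_nhds_unique hTq hLq
      rw [this, ← hEq]
      exact hLp
  exact ⟨⟨impAB, fun hl => impCA (impBC hl)⟩,
    ⟨impBC, fun hc P hP Q hQ => impAB (impCA hc) P hP Q hQ⟩⟩
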